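/- Any intersecting strict Minkowski arrangement of axis-parallel cubes in ℝ^d has at most 2^d members. Equivalently: if p_1, …, p_{2^d+1} are pairwise distinct points of ℝ^d, ρ_1, …, ρ_{2^d+1} > 0, and there is a point b with ‖b − p_i‖_∞ ≤ ρ_i for all i (all 2^d + 1 closed ℓ∞-balls share the point b), then some ball contains the center of another, i.e., there exist indices i ≠ j with ‖p_j − p_i‖_∞ ≤ ρ_i. -/
import Mathlib


/-- An intersecting strict Minkowski arrangement of axis-parallel cubes
(closed ℓ∞-balls) in `ℝ^d` has at most `2^d` members: among `2^d + 1` distinct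
such cubes sharing a common point, some cube contains the center of another. -/
theorem stmt_8 {d : ℕ} (p : Fin (2 ^ d + 1) → (Fin d → ℝ))
    (hp : Function.Injective p) (ρ : Fin (2 ^ d + 1) → ℝ) (hρ : ∀ i, 0 < ρ i)
    (b : Fin d → ℝ) (hb : ∀ i, dist b (p i) ≤ ρ i) :
    ∃ i j, i ≠ j ∧ dist (p j) (p i) ≤ ρ i := by
  classical
  set s : Fin (2 ^ d + 1) → (Fin d → Bool) := fun i k => decide (p i k ≤ b k) with hs
  have hcard : Fintype.card (Fin d → Bool) < Fintype.card (Fin (2 ^ d + 1)) := by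
    simp
  obtain ⟨i, j, hij, hsij⟩ := Fintype.exists_ne_map_eq_of_card_lt s hcard
  have key : ∀ a c : Fin (2 ^ d + 1), s a = s c → ρ c ≤ ρ a →
      dist (p c) (p a) ≤ ρ a := by
    intro a c hsc hρac
    rw [dist_pi_le_iff (hρ a).le]
    intro k
    have h1 : dist (b k) (p a k) ≤ ρ a := (dist_le_pi_dist b (p a) k).trans (hb a)
    have h2 : dist (b k) (p c k) ≤ ρ c := (dist_le_pi_dist b (p c) k).trans (hb c)
    have hsk : (p a k ≤ b k) ↔ (p c k ≤ b k) := by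
      have := congrFun hsc k
      simpa [hs] using this
    rw [Real.dist_eq] at h1 h2 ⊢
    rw [abs_le] at h1 h2 ⊢
    rcases le_total (p a k) (b k) with h | h
    · have h' := hsk.mp h
      constructor <;> linarith
    · rcases le_or_gt (p c k) (b k) with h' | h'
      · have := hsk.mpr h'
        constructor <;> linarith
      · constructor <;> linarith
  rcases le_total (ρ i) (ρ j) with h | h
  · exact ⟨j, i, hij.symm, key j i hsij.symm h⟩
  · exact ⟨i, j, hij, key i j hsij h⟩
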